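/- Let T₁, …, Tᵢ be reduction operators relative to (G,<), let U = T₁ ∧ ⋯ ∧ T_{i−1}, and let π̃ : syz(T₁,…,Tᵢ) → syz(U, Tᵢ) be given by (v₁,…,vᵢ) ↦ (v₁+⋯+v_{i−1}, vᵢ). Then π̃ is surjective, and syz(T₁,…,Tᵢ) decomposes as the direct sum of the image of the inclusion syz(T₁,…,T_{i−1}) ↪ syz(T₁,…,Tᵢ) (appending a zero last coordinate) and any subspace mapped isomorphically by π̃ onto syz(U, Tᵢ). In particular, syz(T₁,…,Tᵢ)/syz(T₁,…,T_{i−1}) ≅ syz(U, Tᵢ) ≅ ker(U ∨ Tᵢ). -/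

import Mathlib

open Finsupp

variable {K G : Type*} [Field K] [LinearOrder G] [WellFoundedLT G]

/-- `T` is a reduction operator relative to `(G, <)`. -/
def IsRedOp (T : (G →₀ K) →ₗ[K] (G →₀ K)) : Prop :=
  T ∘ₗ T = T ∧
    ∀ g : G, T (single g 1) = single g 1 ∨ (T (single g 1)).support.max < (g : WithBot G)

/-- The space of syzygies for the family `T₁, …, T_k`, as a submodule of the product:
tuples `(v₁, …, v_k)` with `v_j ∈ ker T_j` and `v₁ + ⋯ + v_k = 0`. -/
noncomputable def SyzMod {k : ℕ} (T : Fin k → (G →₀ K) →ₗ[K] (G →₀ K)) :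
    Submodule K (Fin k → (G →₀ K)) :=
  (⨅ j, (LinearMap.ker (T j)).comap (LinearMap.proj j)) ⊓
    LinearMap.ker (∑ j, (LinearMap.proj j : (Fin k → (G →₀ K)) →ₗ[K] (G →₀ K)))

/-- The space of syzygies for a pair `(T₁, T₂)`. -/
noncomputable def syzPair (T₁ T₂ : (G →₀ K) →ₗ[K] (G →₀ K)) :
    Submodule K ((G →₀ K) × (G →₀ K)) :=
  ((LinearMap.ker T₁).prod (LinearMap.ker T₂)) ⊓
    LinearMap.ker (LinearMap.fst K (G →₀ K) (G →₀ K) + LinearMap.snd K (G →₀ K) (G →₀ K))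

/-- The linear inclusion `ι` appending a zero last coordinate. -/
noncomputable def iotaL (n : ℕ) : (Fin n → (G →₀ K)) →ₗ[K] (Fin (n + 1) → (G →₀ K)) where
  toFun v := Fin.snoc v 0
  map_add' v w := by
    funext j
    refine Fin.lastCases ?_ (fun i => ?_) j <;> simp
  map_smul' c v := by
    funext j
    refine Fin.lastCases ?_ (fun i => ?_) j <;> simp

lemma mem_SyzMod' {k : ℕ} (T : Fin k → (G →₀ K) →ₗ[K] (G →₀ K)) (v : Fin k → (G →₀ K)) :
    v ∈ SyzMod T ↔ (∀ j, T j (v j) = 0) ∧ ∑ j, v j = 0 := by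
  simp [SyzMod, Submodule.mem_iInf, LinearMap.mem_ker]

lemma mem_syzPair' (T₁ T₂ : (G →₀ K) →ₗ[K] (G →₀ K)) (w : (G →₀ K) × (G →₀ K)) :
    w ∈ syzPair T₁ T₂ ↔ T₁ w.1 = 0 ∧ T₂ w.2 = 0 ∧ w.1 + w.2 = 0 := by
  simp [syzPair, and_assoc, LinearMap.mem_ker]

lemma mem_map_iota' {n : ℕ} (S : Fin n → (G →₀ K) →ₗ[K] (G →₀ K))
    (v : Fin (n + 1) → (G →₀ K)) :
    v ∈ (SyzMod S).map (iotaL n) ↔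
      v (Fin.last n) = 0 ∧ (fun j : Fin n => v j.castSucc) ∈ SyzMod S := by
  constructor
  · rintro ⟨u, hu, rfl⟩
    refine ⟨by simp [iotaL], ?_⟩
    convert hu using 1
    suffices h : (fun j : Fin n => (iotaL n) u j.castSucc) = u by simp [h]
    funext j
    simp [iotaL]
  · rintro ⟨h0, hmem⟩
    refine ⟨fun j => v j.castSucc, hmem, ?_⟩
    funext j
    refine Fin.lastCases ?_ (fun i => ?_) j <;> simp [iotaL, h0]


set_option maxSynthPendingDepth 3 in
/-- `π̃` is surjective onto `syz(U, Tᵢ)`; the image of `ι` together with any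
subspace of `syz(T₁,…,Tᵢ)` mapped bijectively by `π̃` onto `syz(U, Tᵢ)` gives a direct sum
decomposition; and the quotient `syz(T₁,…,Tᵢ)/syz(T₁,…,T_{i-1})` is isomorphic to
`ker (U ∨ Tᵢ) = ker U ∩ ker Tᵢ`. -/
theorem syz_decomposition (n : ℕ) (T : Fin (n + 1) → (G →₀ K) →ₗ[K] (G →₀ K))
    (hT : ∀ i, IsRedOp (T i))
    (U : (G →₀ K) →ₗ[K] (G →₀ K)) (hU : IsRedOp U)
    (hUker : LinearMap.ker U = ⨆ j : Fin n, LinearMap.ker (T j.castSucc)) :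
    let pit : (Fin (n + 1) → (G →₀ K)) →ₗ[K] (G →₀ K) × (G →₀ K) :=
      (∑ j : Fin n,
        (LinearMap.proj j.castSucc : (Fin (n + 1) → (G →₀ K)) →ₗ[K] (G →₀ K))).prod
        (LinearMap.proj (Fin.last n))
    (∀ w : (G →₀ K) × (G →₀ K), w ∈ syzPair U (T (Fin.last n)) →
        ∃ v ∈ SyzMod T, pit v = w) ∧
    (∀ W : Submodule K (Fin (n + 1) → (G →₀ K)), W ≤ SyzMod T →
        Set.BijOn pit (W : Set (Fin (n + 1) → (G →₀ K)))
          (syzPair U (T (Fin.last n)) : Set ((G →₀ K) × (G →₀ K))) →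
        W ⊓ (SyzMod fun j : Fin n => T j.castSucc).map (iotaL n) = ⊥ ∧
        W ⊔ (SyzMod fun j : Fin n => T j.castSucc).map (iotaL n) = SyzMod T) ∧
    Nonempty ((↥(SyzMod T) ⧸
        (((SyzMod fun j : Fin n => T j.castSucc).map (iotaL n)).comap
          (SyzMod T).subtype)) ≃ₗ[K]
      ↥(LinearMap.ker U ⊓ LinearMap.ker (T (Fin.last n)))) := by
  intro pit
  have hpit : ∀ v : Fin (n + 1) → (G →₀ K),
      pit v = (∑ j : Fin n, v j.castSucc, v (Fin.last n)) := by
    intro v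
    simp [pit, LinearMap.prod_apply, LinearMap.sum_apply]
  have hle : ∀ j : Fin n, LinearMap.ker (T j.castSucc) ≤ LinearMap.ker U := by
    intro j
    rw [hUker]
    exact le_iSup (fun j : Fin n => LinearMap.ker (T j.castSucc)) j
  -- surjectivity
  have surj : ∀ w : (G →₀ K) × (G →₀ K), w ∈ syzPair U (T (Fin.last n)) →
      ∃ v ∈ SyzMod T, pit v = w := by
    rintro ⟨w₁, w₂⟩ hw
    rw [mem_syzPair'] at hw
    obtain ⟨hw1, hw2, hsum⟩ := hw
    have hw1' : w₁ ∈ ⨆ j : Fin n, LinearMap.ker (T j.castSucc) := by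
      rw [← hUker]; exact hw1
    rw [Submodule.mem_iSup_iff_exists_finsupp] at hw1'
    obtain ⟨f, hf, hfsum⟩ := hw1'
    have hfs : ∑ j : Fin n, f j = w₁ := by
      rw [← hfsum, Finsupp.sum_fintype]
      simp
    refine ⟨Fin.snoc (fun j => f j) w₂, ?_, ?_⟩
    · rw [mem_SyzMod']
      constructor
      · intro j
        refine Fin.lastCases ?_ (fun i => ?_) j
        · simpa using hw2
        · simpa using hf i
      · rw [Fin.sum_univ_castSucc]
        simp only [Fin.snoc_castSucc, Fin.snoc_last]
        rw [hfs]
        exact hsum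
    · rw [hpit]
      simp only [Fin.snoc_castSucc, Fin.snoc_last]
      rw [hfs]
  -- pit maps SyzMod into syzPair
  have hmaps : ∀ v ∈ SyzMod T, pit v ∈ syzPair U (T (Fin.last n)) := by
    intro v hv
    rw [mem_SyzMod'] at hv
    rw [hpit, mem_syzPair']
    refine ⟨?_, hv.1 _, ?_⟩
    · rw [map_sum]
      apply Finset.sum_eq_zero
      intro j _
      exact hle j (by exact hv.1 j.castSucc)
    · rw [← Fin.sum_univ_castSucc]
      exact hv.2
  -- kernel characterization
  have hker0 : ∀ v ∈ SyzMod T, pit v = 0 →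
      v ∈ (SyzMod fun j : Fin n => T j.castSucc).map (iotaL n) := by
    intro v hv h0
    rw [hpit, Prod.mk_eq_zero] at h0
    rw [mem_SyzMod'] at hv
    rw [mem_map_iota']
    exact ⟨h0.2, (mem_SyzMod' _ _).2 ⟨fun j => hv.1 j.castSucc, h0.1⟩⟩
  have himle : (SyzMod fun j : Fin n => T j.castSucc).map (iotaL n) ≤ SyzMod T := by
    intro v hv
    rw [mem_map_iota'] at hv
    obtain ⟨h0, hm⟩ := hv
    rw [mem_SyzMod'] at hm ⊢
    refine ⟨fun j => Fin.lastCases (by rw [h0]; simp) (fun i => hm.1 i) j, ?_⟩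
    rw [Fin.sum_univ_castSucc, hm.2, h0, add_zero]
  have him0 : ∀ v ∈ (SyzMod fun j : Fin n => T j.castSucc).map (iotaL n), pit v = 0 := by
    intro v hv
    rw [mem_map_iota'] at hv
    rw [hpit, hv.1, ((mem_SyzMod' _ _).1 hv.2).2]
    rfl
  refine ⟨surj, ?_, ?_⟩
  · intro W hWle hbij
    constructor
    · rw [eq_bot_iff]
      rintro v ⟨hvW, hvι⟩
      have h1 : pit v = pit 0 := by rw [him0 v hvι, map_zero]
      have := hbij.injOn hvW (by simpa using W.zero_mem) h1
      simpa using this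
    · refine le_antisymm (sup_le hWle himle) ?_
      intro v hv
      obtain ⟨w, hwW, hw⟩ := hbij.surjOn (hmaps v hv)
      have hwS : w ∈ SyzMod T := hWle hwW
      have : v - w ∈ (SyzMod fun j : Fin n => T j.castSucc).map (iotaL n) := by
        apply hker0 _ (Submodule.sub_mem _ hv hwS)
        rw [map_sub, hw, sub_self]
      have : v = w + (v - w) := by abel
      rw [this]
      exact Submodule.add_mem _ (Submodule.mem_sup_left hwW)
        (Submodule.mem_sup_right (by assumption))
  · -- quotient iso
    have hmem : ∀ v : SyzMod T,
        ((LinearMap.proj (Fin.last n)).comp (SyzMod T).subtype) v ∈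
          LinearMap.ker U ⊓ LinearMap.ker (T (Fin.last n)) := by
      rintro ⟨v, hv⟩
      rw [mem_SyzMod'] at hv
      constructor
      · have hlast : v (Fin.last n) = -∑ j : Fin n, v j.castSucc := by
          have := hv.2
          rw [Fin.sum_univ_castSucc] at this
          linear_combination (norm := module) this
        show v (Fin.last n) ∈ LinearMap.ker U
        rw [hlast]
        exact neg_mem (Submodule.sum_mem _ fun j _ =>
          hle j (LinearMap.mem_ker.2 (hv.1 j.castSucc)))
      · exact hv.1 _
    set g : SyzMod T →ₗ[K] ↥(LinearMap.ker U ⊓ LinearMap.ker (T (Fin.last n))) :=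
      LinearMap.codRestrict _ ((LinearMap.proj (Fin.last n)).comp (SyzMod T).subtype) hmem
      with hg
    have hgsurj : Function.Surjective g := by
      rintro ⟨x, hxU, hxT⟩
      obtain ⟨v, hv, hpv⟩ := surj (-x, x) (by
        rw [mem_syzPair']
        exact ⟨by rw [map_neg, hxU, neg_zero], hxT, by simp⟩)
      refine ⟨⟨v, hv⟩, ?_⟩
      apply Subtype.ext
      rw [hpit] at hpv
      have := congrArg Prod.snd hpv
      simpa [hg, LinearMap.codRestrict] using this
    have hkereq : LinearMap.ker g =
        (((SyzMod fun j : Fin n => T j.castSucc).map (iotaL n)).comap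
          (SyzMod T).subtype) := by
      ext ⟨v, hv⟩
      simp only [LinearMap.mem_ker, Submodule.mem_comap, Submodule.subtype_apply]
      constructor
      · intro h
        have h0 : v (Fin.last n) = 0 := by
          have := congrArg Subtype.val h
          simpa [hg, LinearMap.codRestrict] using this
        rw [mem_SyzMod'] at hv
        rw [mem_map_iota']
        refine ⟨h0, (mem_SyzMod' _ _).2 ⟨fun j => hv.1 j.castSucc, ?_⟩⟩
        have := hv.2
        rw [Fin.sum_univ_castSucc, h0, add_zero] at this
        exact this
      · intro h
        rw [mem_map_iota'] at h
        apply Subtype.ext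
        simpa [hg, LinearMap.codRestrict] using h.1
    exact ⟨(Submodule.quotEquivOfEq _ _ hkereq.symm).trans
      (g.quotKerEquivOfSurjective hgsurj)⟩
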